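/- For all positive integers n and k with k ≤ n, Σ_{j=k}^{n} j·s(n,j)·S(j,k) = (n!/(k-1)!)·Σ_{i=1}^{n-k+1} (1/i)·C(n-i, k-1). -/

import Mathlib

/-- Unsigned Stirling numbers of the first kind. -/
def stirling1 : ℕ → ℕ → ℕ
  | 0, 0 => 1
  | 0, _ + 1 => 0
  | _ + 1, 0 => 0
  | n + 1, k + 1 => stirling1 n k + n * stirling1 n (k + 1)

/-- Stirling numbers of the second kind. -/
def stirling2 : ℕ → ℕ → ℕ
  | 0, 0 => 1
  | 0, _ + 1 => 0
  | _ + 1, 0 => 0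
  | n + 1, k + 1 => stirling2 n k + (k + 1) * stirling2 n (k + 1)

lemma stirling1_lt : ∀ n k : ℕ, n < k → stirling1 n k = 0 := by
  intro n
  induction n with
  | zero => intro k h; match k, h with | k+1, _ => rfl
  | succ n ih =>
    intro k h
    match k, h with
    | k+1, h =>
      have h1 : n < k := by omega
      have h2 : n < k+1 := by omega
      simp [stirling1, ih _ h1, ih _ h2]

lemma stirling2_lt : ∀ j k : ℕ, j < k → stirling2 j k = 0 := by
  intro j
  induction j with
  | zero => intro k h; match k, h with | k+1, _ => rfl
  | succ j ih =>
    intro k h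
    match k, h with
    | k+1, h =>
      have h1 : j < k := by omega
      have h2 : j < k+1 := by omega
      simp [stirling2, ih _ h1, ih _ h2]

lemma stirling1_self (n : ℕ) : stirling1 n n = 1 := by
  induction n with
  | zero => rfl
  | succ n ih => simp [stirling1, ih, stirling1_lt n (n+1) (by omega)]

lemma stirling2_self (n : ℕ) : stirling2 n n = 1 := by
  induction n with
  | zero => rfl
  | succ n ih => simp [stirling2, ih, stirling2_lt n (n+1) (by omega)]
open Finset in
/-- A(n,k) = Σ j s(n,j) S(j,k). -/
def Af (n k : ℕ) : ℚ := ∑ j ∈ range (n+1), (j : ℚ) * (stirling1 n j : ℚ) * (stirling2 j k : ℚ)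

open Finset in
/-- L(n,k) = Σ s(n,j) S(j,k) (Lah numbers). -/
def Lf (n k : ℕ) : ℚ := ∑ j ∈ range (n+1), (stirling1 n j : ℚ) * (stirling2 j k : ℚ)

open Finset in
lemma sum_shift (n : ℕ) (g : ℕ → ℚ) (h0 : g 0 = 0) (htop : g (n+1) = 0) :
    ∑ j ∈ range (n+1), g (j+1) = ∑ j ∈ range (n+1), g j := by
  rw [Finset.sum_range_succ, htop, add_zero, Finset.sum_range_succ' g, h0, add_zero]

open Finset in
lemma Lf_rec (n k : ℕ) :
    Lf (n+1) (k+1) = Lf n k + ((k:ℚ)+1) * Lf n (k+1) + (n:ℚ) * Lf n (k+1) := by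
  have hB : ∑ j ∈ range (n+1), (stirling1 n (j+1) : ℚ) * (stirling2 (j+1) (k+1) : ℚ)
      = Lf n (k+1) := by
    rw [Lf, ← sum_shift n (fun j => (stirling1 n j : ℚ) * (stirling2 j (k+1) : ℚ))]
    · simp [stirling2_lt 0 (k+1) (by omega)]
    · simp [stirling1_lt n (n+1) (by omega)]
  rw [Lf, Finset.sum_range_succ' (fun j => (stirling1 (n+1) j : ℚ) * (stirling2 j (k+1) : ℚ)) (n+1)]
  have h0 : (stirling1 (n+1) 0 : ℚ) * (stirling2 0 (k+1) : ℚ) = 0 := by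
    simp [stirling1]
  rw [h0, add_zero]
  have hexp : ∀ j ∈ range (n+1),
      (stirling1 (n+1) (j+1) : ℚ) * (stirling2 (j+1) (k+1) : ℚ)
      = ((stirling1 n j : ℚ) * (stirling2 j k : ℚ)
          + ((k:ℚ)+1) * ((stirling1 n j : ℚ) * (stirling2 j (k+1) : ℚ)))
        + (n:ℚ) * ((stirling1 n (j+1) : ℚ) * (stirling2 (j+1) (k+1) : ℚ)) := by
    intro j _
    have e1 : stirling1 (n+1) (j+1) = stirling1 n j + n * stirling1 n (j+1) := rfl
    have e2 : stirling2 (j+1) (k+1) = stirling2 j k + (k+1) * stirling2 j (k+1) := rfl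
    rw [e1, e2]
    push_cast
    ring
  rw [Finset.sum_congr rfl hexp, Finset.sum_add_distrib, Finset.sum_add_distrib,
    ← Finset.mul_sum, ← Finset.mul_sum, hB]
  rfl
open Finset in
lemma Af_rec (n k : ℕ) :
    Af (n+1) (k+1) = (Af n k + Lf n k) + ((k:ℚ)+1) * (Af n (k+1) + Lf n (k+1))
      + (n:ℚ) * Af n (k+1) := by
  have hB : ∑ j ∈ range (n+1), ((j:ℚ)+1) * (stirling1 n (j+1) : ℚ) * (stirling2 (j+1) (k+1) : ℚ)
      = Af n (k+1) := by
    rw [Af, ← sum_shift n (fun j => (j:ℚ) * (stirling1 n j : ℚ) * (stirling2 j (k+1) : ℚ))]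
    · push_cast; rfl
    · simp
    · simp [stirling1_lt n (n+1) (by omega)]
  rw [Af, Finset.sum_range_succ'
    (fun j => (j:ℚ) * (stirling1 (n+1) j : ℚ) * (stirling2 j (k+1) : ℚ)) (n+1)]
  have h0 : ((0:ℕ):ℚ) * (stirling1 (n+1) 0 : ℚ) * (stirling2 0 (k+1) : ℚ) = 0 := by simp
  rw [h0, add_zero]
  have hexp : ∀ j ∈ range (n+1),
      ((j+1 : ℕ):ℚ) * (stirling1 (n+1) (j+1) : ℚ) * (stirling2 (j+1) (k+1) : ℚ)
      = (((j:ℚ) * (stirling1 n j : ℚ) * (stirling2 j k : ℚ)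
            + (stirling1 n j : ℚ) * (stirling2 j k : ℚ))
          + ((k:ℚ)+1) * ((j:ℚ) * (stirling1 n j : ℚ) * (stirling2 j (k+1) : ℚ)
            + (stirling1 n j : ℚ) * (stirling2 j (k+1) : ℚ)))
        + (n:ℚ) * (((j:ℚ)+1) * (stirling1 n (j+1) : ℚ) * (stirling2 (j+1) (k+1) : ℚ)) := by
    intro j _
    have e1 : stirling1 (n+1) (j+1) = stirling1 n j + n * stirling1 n (j+1) := rfl
    have e2 : stirling2 (j+1) (k+1) = stirling2 j k + (k+1) * stirling2 j (k+1) := rfl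
    rw [e1, e2]
    push_cast
    ring
  rw [Finset.sum_congr rfl hexp, Finset.sum_add_distrib, Finset.sum_add_distrib,
    ← Finset.mul_sum, ← Finset.mul_sum, hB, Finset.sum_add_distrib, Finset.sum_add_distrib]
  rfl

open Finset in
lemma Lf_gt (n k : ℕ) (h : n < k) : Lf n k = 0 := by
  apply Finset.sum_eq_zero
  intro j hj
  rw [mem_range] at hj
  simp [stirling2_lt j k (by omega)]

open Finset in
lemma Af_gt (n k : ℕ) (h : n < k) : Af n k = 0 := by
  apply Finset.sum_eq_zero
  intro j hj
  rw [mem_range] at hj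
  simp [stirling2_lt j k (by omega)]

open Finset in
lemma Lf_self (n : ℕ) : Lf n n = 1 := by
  rw [Lf, Finset.sum_eq_single_of_mem n (self_mem_range_succ n)]
  · simp [stirling1_self, stirling2_self]
  · intro j hj hne
    rw [mem_range] at hj
    simp [stirling2_lt j n (by omega)]

open Finset in
lemma Af_self (n : ℕ) : Af n n = n := by
  rw [Af, Finset.sum_eq_single_of_mem n (self_mem_range_succ n)]
  · simp [stirling1_self, stirling2_self]
  · intro j hj hne
    rw [mem_range] at hj
    simp [stirling2_lt j n (by omega)]

open Finset in
lemma Lf_zero (n : ℕ) (h : 1 ≤ n) : Lf n 0 = 0 := by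
  apply Finset.sum_eq_zero
  intro j hj
  match j with
  | 0 =>
    match n, h with
    | n+1, _ => simp [stirling1]
  | j+1 => simp [stirling2]

open Finset in
lemma Af_zero (n : ℕ) : Af n 0 = 0 := by
  apply Finset.sum_eq_zero
  intro j hj
  match j with
  | 0 => simp
  | j+1 => simp [stirling2]
lemma Lf_closed : ∀ n k : ℕ, k ≤ n →
    Lf (n+1) (k+1) = ((n+1).factorial : ℚ) / ((k+1).factorial : ℚ) * (n.choose k : ℚ) := by
  intro n
  induction n with
  | zero =>
    intro k hk
    interval_cases k
    rw [Lf_self]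
    norm_num
  | succ n ih =>
    intro k hk
    rw [Lf_rec]
    match k, hk with
    | 0, _ =>
      rw [Lf_zero (n+1) (by omega), ih 0 (by omega)]
      simp [Nat.factorial_succ]
      ring
    | k+1, hk =>
      rcases Nat.lt_or_ge k n with hkn | hkn
      · -- k+1 ≤ n : both IH apply
        rw [ih k (by omega), ih (k+1) (by omega)]
        have hpas : ((n+1).choose (k+1) : ℚ) = (n.choose k : ℚ) + (n.choose (k+1) : ℚ) := by
          rw [Nat.choose_succ_succ]; push_cast; ring
        have hkey : ((n:ℚ) - k) * (n.choose k : ℚ) = ((k:ℚ)+1) * (n.choose (k+1) : ℚ) := by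
          have := Nat.choose_succ_right_eq n k
          have hc : ((n - k : ℕ) : ℚ) = (n:ℚ) - k := by
            rw [Nat.cast_sub (by omega)]
          calc ((n:ℚ) - k) * (n.choose k : ℚ) = ((n.choose k * (n - k) : ℕ) : ℚ) := by
                push_cast [hc]; ring
            _ = ((n.choose (k+1) * (k+1) : ℕ) : ℚ) := by rw [← this]
            _ = _ := by push_cast; ring
        rw [hpas]
        have hf1 : ((n+2).factorial : ℚ) = ((n:ℚ)+2) * ((n+1).factorial : ℚ) := by
          rw [show n+2 = (n+1)+1 from rfl, Nat.factorial_succ]; push_cast; ring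
        have hf2 : ((k+2).factorial : ℚ) = ((k:ℚ)+2) * ((k+1).factorial : ℚ) := by
          rw [show k+2 = (k+1)+1 from rfl, Nat.factorial_succ]; push_cast; ring
        have hn1 : ((n+1).factorial : ℚ) ≠ 0 := Nat.cast_ne_zero.mpr (Nat.factorial_ne_zero _)
        have hn2 : ((k+1).factorial : ℚ) ≠ 0 := Nat.cast_ne_zero.mpr (Nat.factorial_ne_zero _)
        rw [hf1, hf2]
        field_simp
        push_cast
        linear_combination -hkey
      · -- k = n : top case
        have hkn' : k = n := by omega
        subst hkn'
        rw [Lf_self, Lf_gt (k+1) (k+2) (by omega)]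
        rw [Nat.choose_self]
        have hn1 : ((k+2).factorial : ℚ) ≠ 0 := Nat.cast_ne_zero.mpr (Nat.factorial_ne_zero _)
        field_simp
        norm_num
open Finset in
lemma key (t d : ℕ) (ht : t ≤ d) :
    ((d:ℚ)+2) * ∑ m ∈ Ico (t+1) (d+2), (m.choose (t+1) : ℚ) / ((d:ℚ)+2-(m:ℚ))
    = ((t:ℚ)+1) * ∑ m ∈ Ico t (d+1), (m.choose t : ℚ) / ((d:ℚ)+1-(m:ℚ))
      + ((d:ℚ)+(t:ℚ)+3) * ∑ m ∈ Ico (t+1) (d+1), (m.choose (t+1) : ℚ) / ((d:ℚ)+1-(m:ℚ))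
      + (((d+1).choose (t+1) : ℚ)) := by
  -- reindex the LHS sum
  have h1 : ∑ m ∈ Ico (t+1) (d+2), (m.choose (t+1) : ℚ) / ((d:ℚ)+2-(m:ℚ))
      = ∑ m ∈ Ico t (d+1), ((m.choose t : ℚ) + (m.choose (t+1) : ℚ)) / ((d:ℚ)+1-(m:ℚ)) := by
    rw [Finset.sum_Ico_eq_sum_range, Finset.sum_Ico_eq_sum_range]
    rw [show d+2-(t+1) = d+1-t from by omega]
    apply Finset.sum_congr rfl
    intro j _
    rw [show t+1+j = (t+j)+1 from by omega, Nat.choose_succ_succ]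
    push_cast
    ring
  -- extend the middle sum down to t
  have h2 : ∑ m ∈ Ico t (d+1), (m.choose (t+1) : ℚ) / ((d:ℚ)+1-(m:ℚ))
      = ∑ m ∈ Ico (t+1) (d+1), (m.choose (t+1) : ℚ) / ((d:ℚ)+1-(m:ℚ)) := by
    rw [Finset.sum_eq_sum_Ico_succ_bot (by omega)
      (fun m => (m.choose (t+1) : ℚ) / ((d:ℚ)+1-(m:ℚ)))]
    simp [Nat.choose_succ_self]
  -- hockey stick
  have h3 : ∑ m ∈ Ico t (d+1), (m.choose t : ℚ) = ((d+1).choose (t+1) : ℚ) := by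
    have h := Nat.sum_Icc_choose d t
    rw [← Finset.Ico_add_one_right_eq_Icc] at h
    have h' := congrArg (fun x : ℕ => (x:ℚ)) h
    push_cast at h' ⊢
    exact h'
  -- pointwise identity
  have h4 : ∀ m ∈ Ico t (d+1),
      ((d:ℚ)+2) * (((m.choose t : ℚ) + (m.choose (t+1) : ℚ)) / ((d:ℚ)+1-(m:ℚ)))
        - ((t:ℚ)+1) * ((m.choose t : ℚ) / ((d:ℚ)+1-(m:ℚ)))
        - ((d:ℚ)+(t:ℚ)+3) * ((m.choose (t+1) : ℚ) / ((d:ℚ)+1-(m:ℚ)))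
      = (m.choose t : ℚ) := by
    intro m hm
    rw [Finset.mem_Ico] at hm
    have hmd : m ≤ d := by omega
    have hden : ((d:ℚ)+1-(m:ℚ)) ≠ 0 := by
      have : (m:ℚ) < (d:ℚ)+1 := by exact_mod_cast Nat.lt_succ_of_le hmd
      intro h; nlinarith
    have hkey : ((t:ℚ)+1) * (m.choose (t+1) : ℚ) = ((m:ℚ)-(t:ℚ)) * (m.choose t : ℚ) := by
      have h := Nat.choose_succ_right_eq m t
      have h' := congrArg (fun x : ℕ => (x:ℚ)) h
      push_cast [Nat.cast_sub hm.1] at h'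
      linarith [h']
    field_simp
    linear_combination -hkey
  have h5 := Finset.sum_congr rfl h4
  rw [Finset.sum_sub_distrib, Finset.sum_sub_distrib, ← Finset.mul_sum, ← Finset.mul_sum,
    ← Finset.mul_sum, h3] at h5
  rw [h1, ← h2]
  linarith [h5]
lemma assemble (D F a b S1 S2 S3 sq dq : ℚ)
    (hF : F ≠ 0) (hs1 : sq+1 ≠ 0) (hs2 : sq+2 ≠ 0)
    (hkey : (dq+2)*S3 = (sq+1)*S1 + (dq+sq+3)*S2 + (a+b)) :
    D/F*S1 + D/((sq+1)*F)*a + (sq+1+1)*(D/((sq+1)*F)*S2 + D/((sq+2)*((sq+1)*F))*b)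
      + (dq+1)*(D/((sq+1)*F)*S2)
    = (dq+2)*D/((sq+1)*F)*S3 := by
  field_simp
  linear_combination (-(D * (sq+2))) * hkey

open Finset in
lemma main : ∀ n t : ℕ, t + 1 ≤ n →
    Af n (t+1) = (n.factorial:ℚ)/(t.factorial:ℚ)
      * ∑ m ∈ Ico t n, (m.choose t : ℚ)/((n:ℚ)-(m:ℚ)) := by
  intro n
  induction n with
  | zero => intro t ht; omega
  | succ n ihn =>
    intro t ht
    rcases Nat.lt_or_ge t n with htn | htn
    · -- t + 1 ≤ n
      match t, ht, htn with
      | 0, _, htn =>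
        obtain ⟨d, rfl⟩ : ∃ d, n = d + 1 := ⟨n-1, by omega⟩
        rw [Af_rec (d+1) 0, Af_zero, Lf_zero (d+1) (by omega), ihn 0 (by omega)]
        have hLf : Lf (d+1) 1 = ((d+1).factorial : ℚ) := by
          rw [Lf_closed d 0 (by omega)]
          simp [Nat.factorial]
        rw [hLf]
        have hsplit : ∑ m ∈ Ico 0 (d+2), (m.choose 0 : ℚ)/(((d+2:ℕ):ℚ)-(m:ℚ))
            = ∑ m ∈ Ico 0 (d+1), (m.choose 0 : ℚ)/(((d+1:ℕ):ℚ)-(m:ℚ)) + 1/((d:ℚ)+2) := by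
          rw [← Finset.range_eq_Ico, ← Finset.range_eq_Ico,
            Finset.sum_range_succ' (fun m => (m.choose 0 : ℚ)/(((d+2:ℕ):ℚ)-(m:ℚ))) (d+1)]
          congr 1
          · apply Finset.sum_congr rfl
            intro m _
            simp only [Nat.choose_zero_right]
            push_cast
            ring
          · simp only [Nat.choose_zero_right]
            push_cast
            ring
        rw [hsplit]
        have hfz : ((d+1).factorial : ℚ) ≠ 0 := Nat.cast_ne_zero.mpr (Nat.factorial_ne_zero _)
        have hf2 : ((d+2).factorial : ℚ) = ((d:ℚ)+2) * ((d+1).factorial : ℚ) := by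
          rw [show d+2 = (d+1)+1 from rfl, Nat.factorial_succ]; push_cast; ring
        rw [hf2]
        simp only [Nat.factorial_zero]
        push_cast
        have hd2 : ((d:ℚ)+2) ≠ 0 := by positivity
        field_simp
        ring
      | (s+1), _, htn =>
        obtain ⟨d, rfl⟩ : ∃ d, n = d + 1 := ⟨n-1, by omega⟩
        have hsd : s + 1 ≤ d := by omega
        rw [Af_rec (d+1) (s+1), ihn s (by omega), ihn (s+1) (by omega),
          Lf_closed d s (by omega), Lf_closed d (s+1) (by omega)]
        have c1 : ∑ m ∈ Ico s (d+1), (m.choose s : ℚ)/(((d+1:ℕ):ℚ)-(m:ℚ))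
            = ∑ m ∈ Ico s (d+1), (m.choose s : ℚ)/((d:ℚ)+1-(m:ℚ)) := by
          apply Finset.sum_congr rfl; intro m _; push_cast; ring
        have c2 : ∑ m ∈ Ico (s+1) (d+1), (m.choose (s+1) : ℚ)/(((d+1:ℕ):ℚ)-(m:ℚ))
            = ∑ m ∈ Ico (s+1) (d+1), (m.choose (s+1) : ℚ)/((d:ℚ)+1-(m:ℚ)) := by
          apply Finset.sum_congr rfl; intro m _; push_cast; ring
        have c3 : ∑ m ∈ Ico (s+1) (d+2), (m.choose (s+1) : ℚ)/(((d+2:ℕ):ℚ)-(m:ℚ))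
            = ∑ m ∈ Ico (s+1) (d+2), (m.choose (s+1) : ℚ)/((d:ℚ)+2-(m:ℚ)) := by
          apply Finset.sum_congr rfl; intro m _; push_cast; ring
        rw [c1, c2, c3]
        have hkey := key s d (by omega)
        have hpas : (((d+1).choose (s+1)) : ℚ) = (d.choose s : ℚ) + (d.choose (s+1) : ℚ) := by
          rw [Nat.choose_succ_succ]; push_cast; ring
        rw [hpas] at hkey
        have hf1 : ((d+2).factorial : ℚ) = ((d:ℚ)+2) * ((d+1).factorial : ℚ) := by
          rw [show d+2 = (d+1)+1 from rfl, Nat.factorial_succ]; push_cast; ring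
        have hf2 : ((s+1).factorial : ℚ) = ((s:ℚ)+1) * (s.factorial : ℚ) := by
          rw [Nat.factorial_succ]; push_cast; ring
        have hf3 : ((s+2).factorial : ℚ) = ((s:ℚ)+2) * ((s+1).factorial : ℚ) := by
          rw [show s+2 = (s+1)+1 from rfl, Nat.factorial_succ]; push_cast; ring
        have hz1 : ((d+1).factorial : ℚ) ≠ 0 := Nat.cast_ne_zero.mpr (Nat.factorial_ne_zero _)
        have hz2 : (s.factorial : ℚ) ≠ 0 := Nat.cast_ne_zero.mpr (Nat.factorial_ne_zero _)
        have hz3 : ((s:ℚ)+1) ≠ 0 := by positivity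
        have hz4 : ((s:ℚ)+2) ≠ 0 := by positivity
        rw [hf1, hf3, hf2]
        push_cast
        exact assemble _ _ _ _ _ _ _ _ _ hz2 hz3 hz4 hkey
    · -- t = n
      have htn' : t = n := by omega
      subst htn'
      rw [Af_self]
      rw [show Ico t (t+1) = {t} from by rw [Finset.Ico_add_one_right_eq_Icc, Finset.Icc_self]]
      rw [Finset.sum_singleton, Nat.choose_self, Nat.factorial_succ]
      have hz : (t.factorial : ℚ) ≠ 0 := Nat.cast_ne_zero.mpr (Nat.factorial_ne_zero _)
      have hz2 : ((t:ℚ)+1)-(t:ℚ) ≠ 0 := by norm_num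
      push_cast
      field_simp
      ring
open scoped BigOperators
theorem stmt_4 (n k : ℕ) (hk : 1 ≤ k) (hkn : k ≤ n) :
    (∑ j ∈ Finset.Icc k n, (j : ℚ) * (stirling1 n j : ℚ) * (stirling2 j k : ℚ)) =
      (n.factorial : ℚ) / ((k - 1).factorial : ℚ) *
        ∑ i ∈ Finset.Icc 1 (n - k + 1), (1 / (i : ℚ)) * ((n - i).choose (k - 1) : ℚ) := by
  obtain ⟨t, rfl⟩ : ∃ t, k = t + 1 := ⟨k - 1, by omega⟩
  have hL : ∑ j ∈ Finset.Icc (t+1) n, (j : ℚ) * (stirling1 n j : ℚ) * (stirling2 j (t+1) : ℚ)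
      = Af n (t+1) := by
    rw [Af]
    apply Finset.sum_subset
    · intro j hj
      rw [Finset.mem_Icc] at hj
      rw [Finset.mem_range]
      omega
    · intro j hj hnj
      rw [Finset.mem_range] at hj
      rw [Finset.mem_Icc] at hnj
      simp [stirling2_lt j (t+1) (by omega)]
  rw [hL, show (t+1)-1 = t from by omega, show n-(t+1)+1 = n-t from by omega]
  have hR : ∑ i ∈ Finset.Icc 1 (n-t), (1/(i:ℚ)) * ((n-i).choose t : ℚ)
      = ∑ m ∈ Finset.Ico t n, (m.choose t : ℚ)/((n:ℚ)-(m:ℚ)) := by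
    apply Finset.sum_nbij' (fun i => n - i) (fun m => n - m)
    · intro i hi
      rw [Finset.mem_Icc] at hi
      rw [Finset.mem_Ico]
      omega
    · intro m hm
      rw [Finset.mem_Ico] at hm
      rw [Finset.mem_Icc]
      omega
    · intro i hi
      rw [Finset.mem_Icc] at hi
      omega
    · intro m hm
      rw [Finset.mem_Ico] at hm
      omega
    · intro i hi
      rw [Finset.mem_Icc] at hi
      rw [Nat.cast_sub (show i ≤ n from by omega)]
      ring
  rw [hR, main n t hkn]
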